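/- For M = 1: let t₁,…,t_N ∈ ℝ with at least one t_i < 0, \hat{t} := max{|t_i| : t_i < 0}, and Σ_{i=1}^N t_i > 0. Then the function TWR_N(φ) = ∏_{i=1}^N (1 + φ t_i/\hat{t}) has a unique maximizer φ* on [0,1], and φ* ∈ (0,1) with TWR_N(φ*) > 1. -/

import Mathlib

open Set Real Filter Topology

private lemma factor_pos' {s x : ℝ} (hs : -1 ≤ s) (hx : x ∈ Set.Ico (0:ℝ) 1) :
    0 < 1 + x * s := by
  nlinarith [hx.1, hx.2, mul_le_mul_of_nonneg_left hs hx.1]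

private lemma aux_concave (s : ℝ) (hs : -1 ≤ s) :
    ConcaveOn ℝ (Set.Ico (0:ℝ) 1) (fun x => Real.log (1 + x * s)) := by
  refine ⟨convex_Ico 0 1, ?_⟩
  intro x hx y hy a b ha hb hab
  have hu : 0 < 1 + x * s := factor_pos' hs hx
  have hv : 0 < 1 + y * s := factor_pos' hs hy
  have key := strictConcaveOn_log_Ioi.concaveOn.2 (Set.mem_Ioi.2 hu) (Set.mem_Ioi.2 hv) ha hb hab
  have heq : a • (1 + x * s) + b • (1 + y * s) = 1 + (a • x + b • y) * s := by
    simp only [smul_eq_mul]; linear_combination s * 0 + hab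
  rw [heq] at key
  simpa using key

private lemma aux_strict (s : ℝ) (hs : -1 ≤ s) (hs0 : s ≠ 0) :
    StrictConcaveOn ℝ (Set.Ico (0:ℝ) 1) (fun x => Real.log (1 + x * s)) := by
  refine ⟨convex_Ico 0 1, ?_⟩
  intro x hx y hy hxy a b ha hb hab
  have hu : 0 < 1 + x * s := factor_pos' hs hx
  have hv : 0 < 1 + y * s := factor_pos' hs hy
  have huv : (1 + x * s) ≠ (1 + y * s) := by
    intro h
    apply hxy
    have : (x - y) * s = 0 := by linarith
    rcases mul_eq_zero.1 this with h' | h'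
    · linarith
    · exact absurd h' hs0
  have key := strictConcaveOn_log_Ioi.2 (Set.mem_Ioi.2 hu) (Set.mem_Ioi.2 hv) huv ha hb hab
  have heq : a • (1 + x * s) + b • (1 + y * s) = 1 + (a • x + b • y) * s := by
    simp only [smul_eq_mul]; linear_combination s * 0 + hab
  rw [heq] at key
  simpa using key

private lemma aux_sum_concave {ι : Type*} (u : Finset ι) (f : ι → ℝ → ℝ)
    (h : ∀ i ∈ u, ConcaveOn ℝ (Set.Ico (0:ℝ) 1) (f i)) :
    ConcaveOn ℝ (Set.Ico (0:ℝ) 1) (fun x => ∑ i ∈ u, f i x) := by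
  classical
  induction u using Finset.induction_on with
  | empty => simpa using concaveOn_const (0:ℝ) (convex_Ico 0 1)
  | insert j v hni ih =>
    have hj := h j (Finset.mem_insert_self _ _)
    have hv := ih fun i hi => h i (Finset.mem_insert_of_mem hi)
    have := hj.add hv
    simp only [Finset.sum_insert hni]
    exact this

/-- Univariate optimal f: TWR_N(φ) = ∏ (1 + φ tᵢ/t̂) has a unique maximizer
φ* on [0,1], and φ* ∈ (0,1) with TWR_N(φ*) > 1. -/
theorem stmt17 (N : ℕ) (t : Fin N → ℝ) (that : ℝ) (hthatpos : 0 < that)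
    (hloss : ∃ i, t i = -that)
    (hbound : ∀ i, t i < 0 → -that ≤ t i)
    (hsum : 0 < ∑ i, t i) :
    ∃ φ ∈ Set.Ioo (0 : ℝ) 1,
      (∀ ψ ∈ Set.Icc (0 : ℝ) 1,
        ∏ i, (1 + ψ * (t i / that)) ≤ ∏ i, (1 + φ * (t i / that))) ∧
      (∀ ψ ∈ Set.Icc (0 : ℝ) 1,
        (∀ χ ∈ Set.Icc (0 : ℝ) 1,
          ∏ i, (1 + χ * (t i / that)) ≤ ∏ i, (1 + ψ * (t i / that))) → ψ = φ) ∧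
      1 < ∏ i, (1 + φ * (t i / that)) := by
  classical
  set s : Fin N → ℝ := fun i => t i / that with hs_def
  set f : ℝ → ℝ := fun φ => ∏ i, (1 + φ * s i) with hf_def
  obtain ⟨i0, hi0⟩ := hloss
  have hsi0 : s i0 = -1 := by
    rw [hs_def]; simp only; rw [hi0, neg_div, div_self (ne_of_gt hthatpos)]
  have hs1 : ∀ i, -1 ≤ s i := by
    intro i
    rw [hs_def]; simp only
    rw [le_div_iff₀ hthatpos]
    rcases lt_or_ge (t i) 0 with h | h
    · have := hbound i h; linarith
    · linarith
  have hfpos : ∀ φ ∈ Set.Ico (0:ℝ) 1, 0 < f φ := by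
    intro φ hφ
    exact Finset.prod_pos fun i _ => factor_pos' (hs1 i) hφ
  have hf0 : f 0 = 1 := by simp [hf_def]
  have hf1 : f 1 = 0 := by
    refine Finset.prod_eq_zero (Finset.mem_univ i0) ?_
    rw [hsi0]; ring
  -- continuity
  have hcont : Continuous f := by
    apply continuous_finset_prod
    intro i _
    fun_prop
  -- maximizer exists
  obtain ⟨φ, hφmem, hφmax⟩ := isCompact_Icc.exists_isMaxOn (Set.nonempty_Icc.2 zero_le_one)
    hcont.continuousOn
  have hφmax' : ∀ ψ ∈ Set.Icc (0:ℝ) 1, f ψ ≤ f φ := fun ψ hψ => hφmax hψ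
  -- derivative at 0 is positive
  have hsumpos : 0 < ∑ i, s i := by
    have : (∑ i, s i) = (∑ i, t i) / that := by rw [Finset.sum_div]
    rw [this]
    exact div_pos hsum hthatpos
  have hderiv : HasDerivAt f (∑ i, s i) 0 := by
    have h1 : ∀ i ∈ Finset.univ, HasDerivAt (fun φ : ℝ => 1 + φ * s i) (s i) 0 :=
      fun i _ => by simpa using ((hasDerivAt_id (0:ℝ)).mul_const (s i)).const_add 1
    have := HasDerivAt.fun_finsetProd h1
    convert this using 1
    · rfl
    · rfl
    simp
  -- find point with f > 1
  have hslope : Tendsto (slope f 0) (𝓝[>] 0) (𝓝 (∑ i, s i)) :=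
    (hasDerivAt_iff_tendsto_slope.1 hderiv).mono_left
      (nhdsWithin_mono 0 fun x hx => ne_of_gt hx)
  have hev1 : ∀ᶠ x in 𝓝[>] (0:ℝ), 0 < slope f 0 x :=
    hslope.eventually (eventually_gt_nhds hsumpos)
  have hev2 : ∀ᶠ x in 𝓝[>] (0:ℝ), x < 1 :=
    eventually_nhdsWithin_of_eventually_nhds (eventually_lt_nhds zero_lt_one)
  have hev0 : ∀ᶠ x in 𝓝[>] (0:ℝ), x ∈ Set.Ioi (0:ℝ) := eventually_mem_nhdsWithin
  obtain ⟨x, hx1, hx2, hx0⟩ := (hev1.and (hev2.and hev0)).exists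
  have hx0' : 0 < x := hx0
  have hfx : 1 < f x := by
    have hsl : slope f 0 x = (f x - 1) / x := by
      rw [slope_def_field]; rw [hf0]; ring_nf
    rw [hsl] at hx1
    have := (div_pos_iff.1 hx1)
    rcases this with ⟨h1, _⟩ | ⟨_, h2⟩
    · linarith
    · linarith
  have hxIcc : x ∈ Set.Icc (0:ℝ) 1 := ⟨le_of_lt hx0', le_of_lt hx2⟩
  have hfφ : 1 < f φ := lt_of_lt_of_le hfx (hφmax' x hxIcc)
  have hφ0 : 0 < φ := by
    rcases lt_or_eq_of_le hφmem.1 with h | h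
    · exact h
    · exfalso; rw [← h, hf0] at hfφ; exact lt_irrefl 1 hfφ
  have hφ1 : φ < 1 := by
    rcases lt_or_eq_of_le hφmem.2 with h | h
    · exact h
    · exfalso; rw [h, hf1] at hfφ; linarith
  -- log-sum function and strict concavity
  set g : ℝ → ℝ := fun φ => ∑ i, Real.log (1 + φ * s i) with hg_def
  have hg_eq : ∀ χ ∈ Set.Ico (0:ℝ) 1, g χ = Real.log (f χ) := by
    intro χ hχ
    rw [hf_def, hg_def]
    simp only
    exact (Real.log_prod (fun i _ => ne_of_gt (factor_pos' (hs1 i) hχ))).symm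
  have hgstrict : StrictConcaveOn ℝ (Set.Ico (0:ℝ) 1) g := by
    have h1 : StrictConcaveOn ℝ (Set.Ico (0:ℝ) 1) (fun x => Real.log (1 + x * s i0)) := by
      apply aux_strict _ (hs1 i0)
      rw [hsi0]; norm_num
    have h2 : ConcaveOn ℝ (Set.Ico (0:ℝ) 1)
        (fun x => ∑ i ∈ Finset.univ.erase i0, Real.log (1 + x * s i)) :=
      aux_sum_concave _ _ fun i _ => aux_concave _ (hs1 i)
    have h3 := h1.add_concaveOn h2
    have hfun : (fun x => Real.log (1 + x * s i0)) +
        (fun x => ∑ i ∈ Finset.univ.erase i0, Real.log (1 + x * s i)) = g := by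
      funext x
      simp only [Pi.add_apply, hg_def]
      exact Finset.add_sum_erase Finset.univ (fun i => Real.log (1 + x * s i)) (Finset.mem_univ i0)
    rwa [hfun] at h3
  refine ⟨φ, ⟨hφ0, hφ1⟩, hφmax', ?_, hfφ⟩
  intro ψ hψ hψmax
  have hfψ : f φ ≤ f ψ := hψmax φ ⟨le_of_lt hφ0, le_of_lt hφ1⟩
  have hfψ1 : 1 < f ψ := lt_of_lt_of_le hfφ hfψ
  have hψ1 : ψ < 1 := by
    rcases lt_or_eq_of_le hψ.2 with h | h
    · exact h
    · exfalso; rw [h, hf1] at hfψ1; linarith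
  have hψIco : ψ ∈ Set.Ico (0:ℝ) 1 := ⟨hψ.1, hψ1⟩
  have hφIco : φ ∈ Set.Ico (0:ℝ) 1 := ⟨le_of_lt hφ0, hφ1⟩
  have hmaxψ : IsMaxOn g (Set.Ico (0:ℝ) 1) ψ := by
    intro χ hχ
    simp only [Set.mem_setOf_eq]
    rw [hg_eq χ hχ, hg_eq ψ hψIco]
    exact Real.log_le_log (hfpos χ hχ) (hψmax χ ⟨hχ.1, le_of_lt hχ.2⟩)
  have hmaxφ : IsMaxOn g (Set.Ico (0:ℝ) 1) φ := by
    intro χ hχ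
    simp only [Set.mem_setOf_eq]
    rw [hg_eq χ hχ, hg_eq φ hφIco]
    exact Real.log_le_log (hfpos χ hχ) (hφmax' χ ⟨hχ.1, le_of_lt hχ.2⟩)
  exact hgstrict.eq_of_isMaxOn hmaxψ hmaxφ hψIco hφIco
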